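/- For all integers q ≥ 2 and n ≥ 1, the least distortion of an embedding of the Hamming graph H(q,n) into Euclidean space equals √n, i.e. c_2(H(q,n)) = √n. -/

import Mathlib

open scoped BigOperators

/-- The least distortion `c₂(G)` of an embedding of the connected graph `G`
(with its shortest path metric) into Euclidean space. -/
noncomputable def leastDistortion {V : Type*} [Fintype V] (G : SimpleGraph V) : ℝ :=
  sInf {D : ℝ | ∃ (m : ℕ) (ρ : V → EuclideanSpace ℝ (Fin m)),
    ∀ x y : V, (G.dist x y : ℝ) ≤ ‖ρ x - ρ y‖ ∧ ‖ρ x - ρ y‖ ≤ D * (G.dist x y : ℝ)}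

/-- The Hamming graph `H(q, n)`: vertices are vectors of length `n` over a
`q`-element alphabet, two being adjacent iff they differ in exactly one coordinate. -/
def hammingGraph (q n : ℕ) : SimpleGraph (Fin n → Fin q) where
  Adj x y := hammingDist x y = 1
  symm := by
    constructor
    intro x y h
    rwa [hammingDist_comm]
  loopless := by
    constructor
    intro x h
    simp [hammingDist_self] at h

open Finset

example (q n : ℕ) (x y : Fin n → Fin q) :
    hammingDist x y = (Finset.univ.filter fun i => x i ≠ y i).card := rfl

lemma walk_exists (q n : ℕ) : ∀ (k : ℕ) (x y : Fin n → Fin q), hammingDist x y = k →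
    ∃ p : (hammingGraph q n).Walk x y, p.length = k := by
  intro k
  induction k with
  | zero => intro x y h; rw [hammingDist_eq_zero] at h; subst h; exact ⟨SimpleGraph.Walk.nil, rfl⟩
  | succ k ih =>
    intro x y h
    have hne : (Finset.univ.filter fun i => x i ≠ y i).Nonempty := by
      rw [← Finset.card_pos]
      show 0 < hammingDist x y
      omega
    obtain ⟨i, hi⟩ := hne
    simp only [Finset.mem_filter] at hi
    set x' := Function.update x i (y i) with hx'
    have hfilter : (Finset.univ.filter fun j => x' j ≠ y j)
        = (Finset.univ.filter fun j => x j ≠ y j).erase i := by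
      ext j
      simp only [Finset.mem_filter, Finset.mem_erase, Finset.mem_univ, true_and]
      by_cases hj : j = i
      · subst hj; simp [hx', Function.update_self]
      · simp [hx', Function.update_of_ne hj, hj]
    have hdx' : hammingDist x' y = k := by
      show (Finset.univ.filter fun j => x' j ≠ y j).card = k
      rw [hfilter, Finset.card_erase_of_mem (by simp [hi.2])]
      have : hammingDist x y = (Finset.univ.filter fun j => x j ≠ y j).card := rfl
      omega
    have hadj : (hammingGraph q n).Adj x x' := by
      show hammingDist x x' = 1
      have : (Finset.univ.filter fun j => x j ≠ x' j) = {i} := by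
        ext j
        simp only [Finset.mem_filter, Finset.mem_univ, true_and, Finset.mem_singleton]
        by_cases hj : j = i
        · subst hj; simp [hx', Function.update_self, hi.2]
        · simp [hx', Function.update_of_ne hj, hj]
      show (Finset.univ.filter fun j => x j ≠ x' j).card = 1
      rw [this, Finset.card_singleton]
    obtain ⟨p, hp⟩ := ih x' y hdx'
    exact ⟨SimpleGraph.Walk.cons hadj p, by simp [hp]⟩

lemma walk_ge (q n : ℕ) {x y : Fin n → Fin q} (p : (hammingGraph q n).Walk x y) :
    hammingDist x y ≤ p.length := by
  induction p with
  | nil => simp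
  | cons h p ih =>
    rename_i u v w
    calc hammingDist u w ≤ hammingDist u v + hammingDist v w := hammingDist_triangle _ _ _
    _ ≤ 1 + p.length := by
        have : hammingDist u v = 1 := h
        omega
    _ = (SimpleGraph.Walk.cons h p).length := by simp [Nat.add_comm]

lemma dist_eq_ham (q n : ℕ) (x y : Fin n → Fin q) :
    (hammingGraph q n).dist x y = hammingDist x y := by
  obtain ⟨p, hp⟩ := walk_exists q n (hammingDist x y) x y rfl
  apply le_antisymm
  · exact hp ▸ SimpleGraph.dist_le p
  · obtain ⟨p', hp'⟩ := SimpleGraph.Reachable.exists_walk_length_eq_dist ⟨p⟩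
    calc hammingDist x y ≤ p'.length := walk_ge q n p'
    _ = _ := hp'

lemma fourpoint (a b c d : ℝ) :
    (a - c)^2 + (b - d)^2 ≤ (a - b)^2 + (b - c)^2 + (c - d)^2 + (d - a)^2 := by
  nlinarith [sq_nonneg (a - b + c - d)]

lemma cubeIneq : ∀ (n : ℕ) (f : (Fin n → Bool) → ℝ),
    ∑ x : Fin n → Bool, (f x - f (fun i => !(x i)))^2
      ≤ ∑ x : Fin n → Bool, ∑ i : Fin n, (f x - f (Function.update x i (!(x i))))^2 := by
  intro n
  induction n with
  | zero =>
    intro f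
    apply Finset.sum_le_sum
    intro x _
    have : (fun i => !(x i)) = x := funext fun i => Fin.elim0 i
    rw [this]
    simp
  | succ n ih =>
    intro f
    set N : (Fin n → Bool) → (Fin n → Bool) := fun ε i => !(ε i) with hN
    have hNN : ∀ ε, N (N ε) = ε := by intro ε; funext i; simp [hN]
    have hNbij : Function.Bijective N :=
      Function.Involutive.bijective hNN
    have sumN : ∀ h : (Fin n → Bool) → ℝ,
        (∑ ε : Fin n → Bool, h (N ε)) = ∑ ε : Fin n → Bool, h ε :=
      fun h => Fintype.sum_bijective N hNbij _ _ (fun ε => rfl)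
    have reidx : ∀ (h : (Fin (n+1) → Bool) → ℝ),
        ∑ x : Fin (n+1) → Bool, h x
          = ∑ ε : Fin n → Bool, (h (Fin.cons false ε) + h (Fin.cons true ε)) := by
      intro h
      calc ∑ x : Fin (n+1) → Bool, h x
          = ∑ p : Bool × (Fin n → Bool), h (Fin.cons p.1 p.2) :=
            (Fintype.sum_equiv (Fin.consEquiv (fun _ : Fin (n+1) => Bool)) _ _
              (fun p => rfl)).symm
        _ = ∑ ε : Fin n → Bool, ∑ b : Bool, h (Fin.cons b ε) := by
            rw [Fintype.sum_prod_type_right]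
        _ = ∑ ε : Fin n → Bool, (h (Fin.cons false ε) + h (Fin.cons true ε)) := by
            refine Finset.sum_congr rfl fun ε _ => ?_
            rw [Fintype.sum_bool]; ring
    have negcons : ∀ (b : Bool) (ε : Fin n → Bool),
        (fun i => !((Fin.cons b ε : Fin (n+1) → Bool) i)) = Fin.cons (!b) (N ε) := by
      intro b ε; funext i
      refine Fin.cases ?_ (fun j => ?_) i <;> simp [hN]
    set g : Bool → (Fin n → Bool) → ℝ := fun b ε => f (Fin.cons b ε) with hg
    have lhs_eq : ∑ x : Fin (n+1) → Bool, (f x - f (fun i => !(x i)))^2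
        = ∑ ε : Fin n → Bool,
            ((g false ε - g true (N ε))^2 + (g true ε - g false (N ε))^2) := by
      rw [reidx]
      refine Finset.sum_congr rfl fun ε _ => ?_
      rw [negcons false ε, negcons true ε]
      simp [hg]
    have rhs_eq : ∑ x : Fin (n+1) → Bool, ∑ i : Fin (n+1), (f x - f (Function.update x i (!(x i))))^2
        = ∑ ε : Fin n → Bool,
            (((g false ε - g true ε)^2
              + ∑ j : Fin n, (g false ε - g false (Function.update ε j (!(ε j))))^2)
            + ((g true ε - g false ε)^2
              + ∑ j : Fin n, (g true ε - g true (Function.update ε j (!(ε j))))^2)) := by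
      rw [reidx]
      refine Finset.sum_congr rfl fun ε _ => ?_
      have hb : ∀ b : Bool, ∑ i : Fin (n+1),
          (f (Fin.cons b ε) - f (Function.update (Fin.cons b ε) i (!((Fin.cons b ε : Fin (n+1) → Bool) i))))^2
          = (g b ε - g (!b) ε)^2
            + ∑ j : Fin n, (g b ε - g b (Function.update ε j (!(ε j))))^2 := by
        intro b
        rw [Fin.sum_univ_succ]
        congr 1
        · rw [show ((Fin.cons b ε : Fin (n+1) → Bool) 0) = b from rfl, Fin.update_cons_zero]
        · refine Finset.sum_congr rfl fun j _ => ?_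
          rw [show ((Fin.cons b ε : Fin (n+1) → Bool) j.succ) = ε j from rfl, ← Fin.cons_update]
      rw [hb false, hb true]
      simp only [Bool.not_false, Bool.not_true]
    rw [lhs_eq, rhs_eq]
    have step1 : ∑ ε : Fin n → Bool,
          ((g false ε - g true (N ε))^2 + (g true ε - g false (N ε))^2)
        ≤ ∑ ε : Fin n → Bool,
          ((g false ε - g false (N ε))^2 + (g false (N ε) - g true (N ε))^2
            + (g true (N ε) - g true ε)^2 + (g true ε - g false ε)^2) := by
      refine Finset.sum_le_sum fun ε _ => ?_
      nlinarith [sq_nonneg (g false ε - g false (N ε) + g true (N ε) - g true ε)]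
    refine le_trans step1 ?_
    have e2 : ∑ ε : Fin n → Bool, (g false (N ε) - g true (N ε))^2
        = ∑ ε : Fin n → Bool, (g false ε - g true ε)^2 :=
      sumN (fun ε => (g false ε - g true ε)^2)
    have e3 : ∑ ε : Fin n → Bool, (g true (N ε) - g true ε)^2
        = ∑ ε : Fin n → Bool, (g true ε - g true (N ε))^2 := by
      refine Finset.sum_congr rfl fun ε _ => by ring
    have e4 : ∑ ε : Fin n → Bool, (g true ε - g false ε)^2
        = ∑ ε : Fin n → Bool, (g true ε - g false ε)^2 := rfl
    have ihF := ih (g false)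
    have ihT := ih (g true)
    simp only [hN] at ihF ihT ⊢
    calc ∑ ε : Fin n → Bool,
          ((g false ε - g false (N ε))^2 + (g false (N ε) - g true (N ε))^2
            + (g true (N ε) - g true ε)^2 + (g true ε - g false ε)^2)
        = (∑ ε : Fin n → Bool, (g false ε - g false (N ε))^2)
          + (∑ ε : Fin n → Bool, (g false (N ε) - g true (N ε))^2)
          + (∑ ε : Fin n → Bool, (g true (N ε) - g true ε)^2)
          + (∑ ε : Fin n → Bool, (g true ε - g false ε)^2) := by
          simp [Finset.sum_add_distrib]
      _ ≤ (∑ ε : Fin n → Bool, ∑ j : Fin n, (g false ε - g false (Function.update ε j (!(ε j))))^2)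
          + (∑ ε : Fin n → Bool, (g false ε - g true ε)^2)
          + (∑ ε : Fin n → Bool, ∑ j : Fin n, (g true ε - g true (Function.update ε j (!(ε j))))^2)
          + (∑ ε : Fin n → Bool, (g true ε - g false ε)^2) := by
          rw [e2, e3]
          exact add_le_add (add_le_add (add_le_add ihF le_rfl) ihT) le_rfl
      _ = ∑ ε : Fin n → Bool,
            (((g false ε - g true ε)^2
              + ∑ j : Fin n, (g false ε - g false (Function.update ε j (!(ε j))))^2)
            + ((g true ε - g false ε)^2
              + ∑ j : Fin n, (g true ε - g true (Function.update ε j (!(ε j))))^2)) := by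
          simp only [Finset.sum_add_distrib]
          ring

lemma cubeIneqVec (n m : ℕ) (F : (Fin n → Bool) → EuclideanSpace ℝ (Fin m)) :
    ∑ x : Fin n → Bool, ‖F x - F (fun i => !(x i))‖^2
      ≤ ∑ x : Fin n → Bool, ∑ i : Fin n, ‖F x - F (Function.update x i (!(x i)))‖^2 := by
  have normsq : ∀ v : EuclideanSpace ℝ (Fin m), ‖v‖^2 = ∑ k : Fin m, (v k)^2 := by
    intro v
    rw [EuclideanSpace.norm_eq, Real.sq_sqrt (Finset.sum_nonneg fun k _ => sq_nonneg _)]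
    simp [Real.norm_eq_abs, sq_abs]
  simp only [normsq]
  have hL : ∑ x : Fin n → Bool, ∑ k : Fin m, ((F x - F (fun i => !(x i))) k)^2
      = ∑ k : Fin m, ∑ x : Fin n → Bool, ((F x - F (fun i => !(x i))) k)^2 :=
    Finset.sum_comm
  rw [hL]
  have hR : ∑ x : Fin n → Bool, ∑ i : Fin n, ∑ k : Fin m,
        ((F x - F (Function.update x i (!(x i)))) k)^2
      = ∑ k : Fin m, ∑ x : Fin n → Bool, ∑ i : Fin n,
        ((F x - F (Function.update x i (!(x i)))) k)^2 := by
    rw [show (∑ x : Fin n → Bool, ∑ i : Fin n, ∑ k : Fin m,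
        ((F x - F (Function.update x i (!(x i)))) k)^2)
      = ∑ x : Fin n → Bool, ∑ k : Fin m, ∑ i : Fin n,
        ((F x - F (Function.update x i (!(x i)))) k)^2 from
      Finset.sum_congr rfl fun x _ => Finset.sum_comm]
    exact Finset.sum_comm
  rw [hR]
  exact Finset.sum_le_sum fun k _ => cubeIneq n (fun x => F x k)

lemma lower_bound (q n : ℕ) (hq : 2 ≤ q) (hn : 1 ≤ n) (D : ℝ) (m : ℕ)
    (ρ : (Fin n → Fin q) → EuclideanSpace ℝ (Fin m))
    (h : ∀ x y, ((hammingGraph q n).dist x y : ℝ) ≤ ‖ρ x - ρ y‖ ∧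
      ‖ρ x - ρ y‖ ≤ D * ((hammingGraph q n).dist x y : ℝ)) :
    Real.sqrt n ≤ D := by
  have h' : ∀ x y : Fin n → Fin q, (hammingDist x y : ℝ) ≤ ‖ρ x - ρ y‖ ∧
      ‖ρ x - ρ y‖ ≤ D * (hammingDist x y : ℝ) := by
    intro x y
    have := h x y
    rwa [dist_eq_ham] at this
  set ι : Bool → Fin q := fun b => if b then ⟨1, by omega⟩ else ⟨0, by omega⟩ with hι
  have hιinj : Function.Injective ι := by
    intro a b hab
    cases a <;> cases b <;> simp [hι, Fin.ext_iff] at hab ⊢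
  set emb : (Fin n → Bool) → (Fin n → Fin q) := fun ε i => ι (ε i) with hemb
  have ham_emb : ∀ ε δ : Fin n → Bool, hammingDist (emb ε) (emb δ) = hammingDist ε δ := by
    intro ε δ
    show (Finset.univ.filter fun i => emb ε i ≠ emb δ i).card
      = (Finset.univ.filter fun i => ε i ≠ δ i).card
    congr 1
    apply Finset.filter_congr
    intro i _
    simp only [hemb, ne_eq, eq_iff_iff]
    exact not_congr ⟨fun hh => hιinj hh, fun hh => hh ▸ rfl⟩
  set F : (Fin n → Bool) → EuclideanSpace ℝ (Fin m) := fun ε => ρ (emb ε) with hF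
  have hdiag : ∀ x : Fin n → Bool, hammingDist x (fun i => !(x i)) = n := by
    intro x
    show (Finset.univ.filter fun i => x i ≠ !(x i)).card = n
    rw [Finset.filter_true_of_mem (fun i _ => (Bool.not_ne_self (x i)).symm)]
    simp
  have hedge : ∀ (x : Fin n → Bool) (i : Fin n),
      hammingDist x (Function.update x i (!(x i))) = 1 := by
    intro x i
    show (Finset.univ.filter fun j => x j ≠ Function.update x i (!(x i)) j).card = 1
    have : (Finset.univ.filter fun j => x j ≠ Function.update x i (!(x i)) j) = {i} := by
      ext j
      simp only [Finset.mem_filter, Finset.mem_univ, true_and, Finset.mem_singleton]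
      by_cases hj : j = i
      · subst hj; simp
      · simp [Function.update_of_ne hj, hj]
    rw [this, Finset.card_singleton]
  have hDpos : 0 ≤ D := by
    have hedge1 := hedge (fun _ => false) ⟨0, hn⟩
    have h1 := (h' (emb (fun _ => false))
      (emb (Function.update (fun _ => false) ⟨0, hn⟩ true))).1
    have h2 := (h' (emb (fun _ => false))
      (emb (Function.update (fun _ => false) ⟨0, hn⟩ true))).2
    rw [ham_emb] at h1 h2
    have he : hammingDist (fun _ : Fin n => false)
        (Function.update (fun _ => false) ⟨0, hn⟩ true) = 1 := by
      simpa using hedge (fun _ => false) ⟨0, hn⟩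
    rw [he] at h1 h2
    push_cast at h1 h2
    nlinarith
  -- main inequality
  have card2 : (Fintype.card (Fin n → Bool) : ℝ) = 2^n := by
    simp [Fintype.card_fun]
  have lhs_ge : (2:ℝ)^n * (n:ℝ)^2 ≤ ∑ x : Fin n → Bool, ‖F x - F (fun i => !(x i))‖^2 := by
    have : ∀ x : Fin n → Bool, (n:ℝ)^2 ≤ ‖F x - F (fun i => !(x i))‖^2 := by
      intro x
      have h1 := (h' (emb x) (emb (fun i => !(x i)))).1
      rw [ham_emb, hdiag] at h1
      have : (0:ℝ) ≤ (n:ℝ) := Nat.cast_nonneg n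
      nlinarith
    calc (2:ℝ)^n * (n:ℝ)^2 = ∑ _x : Fin n → Bool, (n:ℝ)^2 := by
          rw [Finset.sum_const, nsmul_eq_mul]
          simp [Fintype.card_fun]
      _ ≤ _ := Finset.sum_le_sum fun x _ => this x
  have rhs_le : ∑ x : Fin n → Bool, ∑ i : Fin n, ‖F x - F (Function.update x i (!(x i)))‖^2
      ≤ (2:ℝ)^n * (n:ℝ) * D^2 := by
    have hterm : ∀ (x : Fin n → Bool) (i : Fin n),
        ‖F x - F (Function.update x i (!(x i)))‖^2 ≤ D^2 := by
      intro x i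
      have h2 := (h' (emb x) (emb (Function.update x i (!(x i))))).2
      rw [ham_emb, hedge] at h2
      have hnn : (0:ℝ) ≤ ‖F x - F (Function.update x i (!(x i)))‖ := norm_nonneg _
      push_cast at h2
      nlinarith
    calc ∑ x : Fin n → Bool, ∑ i : Fin n, ‖F x - F (Function.update x i (!(x i)))‖^2
        ≤ ∑ _x : Fin n → Bool, ∑ _i : Fin n, D^2 :=
          Finset.sum_le_sum fun x _ => Finset.sum_le_sum fun i _ => hterm x i
      _ = (2:ℝ)^n * (n:ℝ) * D^2 := by
          rw [Finset.sum_const, Finset.sum_const, nsmul_eq_mul, nsmul_eq_mul]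
          simp [Fintype.card_fun]
          ring
  have key := le_trans (le_trans lhs_ge (cubeIneqVec n m F)) rhs_le
  have hn' : (1:ℝ) ≤ (n:ℝ) := by exact_mod_cast hn
  have h2n : (0:ℝ) < 2^n := by positivity
  have hnpos : (0:ℝ) < (n:ℝ) := by linarith
  have k2 : (2:ℝ)^n * ((n:ℝ)^2) ≤ (2:ℝ)^n * ((n:ℝ) * D^2) := by
    ring_nf; ring_nf at key; linarith
  have k3 : (n:ℝ)^2 ≤ (n:ℝ)*D^2 := le_of_mul_le_mul_left k2 h2n
  have k4 : (n:ℝ)*(n:ℝ) ≤ (n:ℝ)*D^2 := by rw [sq] at k3; exact k3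
  have : (n:ℝ) ≤ D^2 := le_of_mul_le_mul_left k4 hnpos
  calc Real.sqrt n ≤ Real.sqrt (D^2) := Real.sqrt_le_sqrt this
    _ = D := by rw [Real.sqrt_sq hDpos]

lemma upper_bound (q n : ℕ) (hq : 2 ≤ q) (hn : 1 ≤ n) :
    ∃ (m : ℕ) (ρ : (Fin n → Fin q) → EuclideanSpace ℝ (Fin m)),
      ∀ x y, ((hammingGraph q n).dist x y : ℝ) ≤ ‖ρ x - ρ y‖ ∧
        ‖ρ x - ρ y‖ ≤ Real.sqrt n * ((hammingGraph q n).dist x y : ℝ) := by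
  set c : ℝ := Real.sqrt ((n:ℝ)/2) with hc
  have hc2 : c^2 = (n:ℝ)/2 := Real.sq_sqrt (by positivity)
  set e : Fin n × Fin q ≃ Fin (n * q) := finProdFinEquiv with he
  refine ⟨n * q, fun x => WithLp.toLp 2 (fun k => if x (e.symm k).1 = (e.symm k).2 then c else 0), ?_⟩
  intro x y
  set ρ : (Fin n → Fin q) → EuclideanSpace ℝ (Fin (n * q)) :=
    fun x => WithLp.toLp 2 (fun k => if x (e.symm k).1 = (e.symm k).2 then c else 0) with hρ
  show ((hammingGraph q n).dist x y : ℝ) ≤ ‖ρ x - ρ y‖ ∧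
    ‖ρ x - ρ y‖ ≤ Real.sqrt n * ((hammingGraph q n).dist x y : ℝ)
  have normsq : ‖ρ x - ρ y‖^2 = (n:ℝ) * hammingDist x y := by
    have h1 : ‖ρ x - ρ y‖^2 = ∑ k : Fin (n*q), ((ρ x - ρ y) k)^2 := by
      rw [EuclideanSpace.norm_eq, Real.sq_sqrt (Finset.sum_nonneg fun k _ => sq_nonneg _)]
      simp [Real.norm_eq_abs, sq_abs]
    rw [h1]
    have h2 : ∑ k : Fin (n*q), ((ρ x - ρ y) k)^2
        = ∑ p : Fin n × Fin q, ((ρ x - ρ y) (e p))^2 :=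
      (Fintype.sum_equiv e _ _ (fun p => rfl)).symm
    rw [h2]
    have h3 : ∀ p : Fin n × Fin q, ((ρ x - ρ y) (e p))^2
        = ((if x p.1 = p.2 then c else 0) - (if y p.1 = p.2 then c else 0))^2 := by
      intro p
      have : (ρ x - ρ y) (e p) = ρ x (e p) - ρ y (e p) := rfl
      rw [this]
      simp [hρ, Equiv.symm_apply_apply]
    rw [Finset.sum_congr rfl fun p _ => h3 p, Fintype.sum_prod_type]
    have inner : ∀ i : Fin n,
        ∑ a : Fin q, ((if x i = a then c else 0) - (if y i = a then c else 0))^2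
          = if x i = y i then 0 else 2*c^2 := by
      intro i
      by_cases hxy : x i = y i
      · rw [if_pos hxy]
        apply Finset.sum_eq_zero
        intro a _
        rw [hxy]
        ring
      · rw [if_neg hxy]
        have expand : ∀ a : Fin q,
            ((if x i = a then c else 0) - (if y i = a then c else 0))^2
              = (if x i = a then c^2 else 0) + (if y i = a then c^2 else 0) := by
          intro a
          by_cases h1 : x i = a <;> by_cases h2 : y i = a
          · exact absurd (h1.trans h2.symm) hxy
          · simp [h1, h2]
          · simp [h1, h2]
          · simp [h1, h2]
        rw [Finset.sum_congr rfl fun a _ => expand a, Finset.sum_add_distrib,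
          Finset.sum_ite_eq, Finset.sum_ite_eq]
        simp
        ring
    rw [Finset.sum_congr rfl fun i _ => inner i]
    rw [Finset.sum_ite, Finset.sum_const, Finset.sum_const, smul_zero, zero_add, nsmul_eq_mul, hc2]
    have : (Finset.univ.filter fun i => ¬(x i = y i)).card = hammingDist x y := rfl
    rw [this]
    ring
  have hnorm : ‖ρ x - ρ y‖ = Real.sqrt ((n:ℝ) * hammingDist x y) := by
    rw [← normsq, Real.sqrt_sq (norm_nonneg _)]
  rw [dist_eq_ham, hnorm]
  set d : ℕ := hammingDist x y with hd
  have hdn : d ≤ n := le_trans (hammingDist_le_card_fintype) (le_of_eq (Fintype.card_fin n))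
  constructor
  · have h1 : ((d:ℝ))^2 ≤ (n:ℝ) * d := by
      have : (d:ℝ) ≤ (n:ℝ) := by exact_mod_cast hdn
      nlinarith [Nat.cast_nonneg (α := ℝ) d]
    calc (d:ℝ) = Real.sqrt ((d:ℝ)^2) := by rw [Real.sqrt_sq (Nat.cast_nonneg d)]
      _ ≤ Real.sqrt ((n:ℝ) * d) := Real.sqrt_le_sqrt h1
  · rw [Real.sqrt_mul (Nat.cast_nonneg n)]
    have : Real.sqrt (d:ℝ) ≤ (d:ℝ) := by
      rcases Nat.eq_zero_or_pos d with h0 | h0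
      · simp [h0]
      · have h1 : (d:ℝ) ≤ ((d:ℝ))^2 := by
          have : (1:ℝ) ≤ (d:ℝ) := by exact_mod_cast h0
          nlinarith
        calc Real.sqrt (d:ℝ) ≤ Real.sqrt ((d:ℝ)^2) := Real.sqrt_le_sqrt h1
          _ = (d:ℝ) := Real.sqrt_sq (Nat.cast_nonneg d)
    exact mul_le_mul_of_nonneg_left this (Real.sqrt_nonneg _)

theorem stmt6 (q n : ℕ) (hq : 2 ≤ q) (hn : 1 ≤ n) :
    leastDistortion (hammingGraph q n) = Real.sqrt n := by
  unfold leastDistortion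
  have hmem : Real.sqrt n ∈ {D : ℝ | ∃ (m : ℕ) (ρ : (Fin n → Fin q) → EuclideanSpace ℝ (Fin m)),
      ∀ x y, ((hammingGraph q n).dist x y : ℝ) ≤ ‖ρ x - ρ y‖ ∧
        ‖ρ x - ρ y‖ ≤ D * ((hammingGraph q n).dist x y : ℝ)} := by
    obtain ⟨m, ρ, h⟩ := upper_bound q n hq hn
    exact ⟨m, ρ, h⟩
  have hlb : ∀ D ∈ {D : ℝ | ∃ (m : ℕ) (ρ : (Fin n → Fin q) → EuclideanSpace ℝ (Fin m)),
      ∀ x y, ((hammingGraph q n).dist x y : ℝ) ≤ ‖ρ x - ρ y‖ ∧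
        ‖ρ x - ρ y‖ ≤ D * ((hammingGraph q n).dist x y : ℝ)}, Real.sqrt n ≤ D := by
    rintro D ⟨m, ρ, h⟩
    exact lower_bound q n hq hn D m ρ h
  exact le_antisymm (csInf_le ⟨Real.sqrt n, hlb⟩ hmem) (le_csInf ⟨Real.sqrt n, hmem⟩ hlb)
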